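/- If u₁ and u₂ are both regular solutions (continuous on the closed rectangle [0,L] × [0,T], with u_t, u_x, u_xx continuous for 0 < t ≤ T) of the Neumann problem u_t − ε u_xx + a u + b ∫₀^t e^{−β(t−τ)} u(x,τ) dτ = f(x,t) on (0,L)×(0,T], u(x,0) = u₀(x), u_x(0,t) = ψ₁(t), u_x(L,t) = ψ₂(t), with the same continuous data f, u₀, ψ₁, ψ₂, then u₁ = u₂ on [0,L] × [0,T]. -/

import Mathlib

open MeasureTheory Real Set

/-- If a continuous nonnegative function has zero integral over `[0,L]`, it vanishes there. -/
lemma aux_integral_zero {L : ℝ} (hL : 0 < L) {g : ℝ → ℝ} (hg : Continuous g)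
    (hnn : ∀ y, 0 ≤ g y) (hI : ∫ y in (0:ℝ)..L, g y = 0) :
    ∀ x ∈ Set.Icc (0:ℝ) L, g x = 0 := by
  intro x hx
  by_contra hne
  have hgx : 0 < g x := (hnn x).lt_of_ne (Ne.symm hne)
  obtain ⟨δ, hδ, hδ2⟩ := Metric.continuousAt_iff.1 hg.continuousAt (g x / 2) (by positivity)
  set α := max 0 (x - δ/2) with hα
  set β := min L (x + δ/2) with hβ
  have hx0 : (0:ℝ) ≤ x := hx.1
  have hxL : x ≤ L := hx.2
  have hαβ : α < β :=
    max_lt (lt_min hL (by linarith)) (lt_min (by linarith) (by linarith))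
  have h0α : (0:ℝ) ≤ α := le_max_left _ _
  have hβL : β ≤ L := min_le_left _ _
  have hmid : ∀ y ∈ Set.Icc α β, g x / 2 ≤ g y := by
    intro y hy
    have h1 : x - δ/2 ≤ y := le_trans (le_max_right _ _) hy.1
    have h2 : y ≤ x + δ/2 := hy.2.trans (min_le_right _ _)
    have hd : dist y x < δ := by
      rw [Real.dist_eq]; rw [abs_lt]; constructor <;> linarith
    have := hδ2 hd
    rw [Real.dist_eq, abs_lt] at this
    linarith [this.1]
  have hi1 : IntervalIntegrable g volume 0 α := hg.intervalIntegrable _ _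
  have hi2 : IntervalIntegrable g volume α β := hg.intervalIntegrable _ _
  have hi3 : IntervalIntegrable g volume β L := hg.intervalIntegrable _ _
  have hsplit : (∫ y in (0:ℝ)..α, g y) + (∫ y in α..β, g y) + (∫ y in β..L, g y)
      = ∫ y in (0:ℝ)..L, g y := by
    rw [intervalIntegral.integral_add_adjacent_intervals hi1 hi2,
      intervalIntegral.integral_add_adjacent_intervals (hg.intervalIntegrable _ _) hi3]
  have hm : (β - α) * (g x / 2) ≤ ∫ y in α..β, g y := by
    have := intervalIntegral.integral_mono_on (μ := volume) (f := fun _ => g x / 2) hαβ.le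
      intervalIntegrable_const (hg.intervalIntegrable _ _) (fun y hy => hmid y hy)
    simpa [intervalIntegral.integral_const, smul_eq_mul, mul_div_assoc] using this
  have hnn1 : 0 ≤ ∫ y in (0:ℝ)..α, g y :=
    intervalIntegral.integral_nonneg h0α (fun y _ => hnn y)
  have hnn3 : 0 ≤ ∫ y in β..L, g y :=
    intervalIntegral.integral_nonneg hβL (fun y _ => hnn y)
  nlinarith [hm, hnn1, hnn3, hsplit, hI, hαβ, hgx]

/-- Fubini for continuous functions on a rectangle, interval-integral form. -/
lemma aux_fubini {L t : ℝ} (hL : 0 ≤ L) (ht : 0 ≤ t) {g : ℝ → ℝ → ℝ}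
    (hg : Continuous fun p : ℝ × ℝ => g p.1 p.2) :
    ∫ x in (0:ℝ)..L, (∫ τ in (0:ℝ)..t, g x τ) = ∫ τ in (0:ℝ)..t, (∫ x in (0:ℝ)..L, g x τ) := by
  rw [intervalIntegral.integral_of_le hL, intervalIntegral.integral_of_le ht]
  simp_rw [intervalIntegral.integral_of_le ht, intervalIntegral.integral_of_le hL]
  apply MeasureTheory.integral_integral_swap
  rw [Measure.prod_restrict, ← Measure.volume_eq_prod]
  exact (hg.continuousOn.integrableOn_compact (isCompact_Icc.prod isCompact_Icc)).mono_set
    (Set.prod_mono Set.Ioc_subset_Icc_self Set.Ioc_subset_Icc_self)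

/-- A Grönwall-type lemma: a continuous nonnegative `E` vanishing at `0` whose derivative on
`(0,T)` is bounded by `K·E + K·∫₀ᵗ E` must vanish on `[0,T]`. -/
lemma aux_gronwall {T K : ℝ} (hT : 0 < T) (hK : 0 ≤ K) {E : ℝ → ℝ}
    (hEc : Continuous E) (hE0 : E 0 = 0) (hEnn : ∀ t, 0 ≤ E t)
    (hD : ∀ t ∈ Set.Ioo (0:ℝ) T, ∃ D, HasDerivAt E D t ∧
      D ≤ K * E t + K * ∫ s in (0:ℝ)..t, E s) :
    ∀ t ∈ Set.Icc (0:ℝ) T, E t = 0 := by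
  set φ : ℝ → ℝ := fun t => ∫ s in (0:ℝ)..t, E s with hφdef
  have hφd : ∀ t : ℝ, HasDerivAt φ (E t) t := fun t =>
    intervalIntegral.integral_hasDerivAt_right (hEc.intervalIntegrable _ _)
      (hEc.stronglyMeasurableAtFilter _ _) hEc.continuousAt
  have hφc : Continuous φ := continuous_iff_continuousAt.2 fun t => (hφd t).continuousAt
  have hφnn : ∀ t ∈ Set.Icc (0:ℝ) T, 0 ≤ φ t := fun t ht =>
    intervalIntegral.integral_nonneg ht.1 (fun s _ => hEnn s)
  set c : ℝ := K + 1 with hc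
  set M : ℝ → ℝ := fun t => Real.exp (-c * t) * (E t + φ t) with hM
  have hMd : ∀ t ∈ Set.Ioo (0:ℝ) T, ∃ D, HasDerivAt E D t ∧
      HasDerivAt M (Real.exp (-c*t) * (-c) * (E t + φ t) + Real.exp (-c*t) * (D + E t)) t ∧
      D ≤ K * E t + K * φ t := by
    intro t ht
    obtain ⟨D, hDt, hDle⟩ := hD t ht
    have hexp : HasDerivAt (fun s : ℝ => Real.exp (-c * s)) (Real.exp (-c*t) * (-c)) t := by
      simpa using (((hasDerivAt_id t).const_mul (-c)).exp)
    exact ⟨D, hDt, hexp.mul (hDt.add (hφd t)), hDle⟩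
  have hMc : Continuous M :=
    ((Real.continuous_exp.comp (continuous_const.mul continuous_id)).mul (hEc.add hφc))
  have hManti : AntitoneOn M (Set.Icc 0 T) := by
    apply antitoneOn_of_deriv_nonpos (convex_Icc 0 T) hMc.continuousOn
    · intro t ht
      rw [interior_Icc] at ht
      obtain ⟨D, _, hMder, _⟩ := hMd t ht
      exact hMder.differentiableAt.differentiableWithinAt
    · intro t ht
      rw [interior_Icc] at ht
      obtain ⟨D, _, hMder, hDle⟩ := hMd t ht
      rw [hMder.deriv]
      have hA : 0 < Real.exp (-c * t) := Real.exp_pos _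
      have hE := hEnn t
      have hφ' := hφnn t ⟨ht.1.le, ht.2.le⟩
      have h1 : D + E t ≤ c * (E t + φ t) := by nlinarith
      have h2 : Real.exp (-c*t) * (D + E t) ≤ Real.exp (-c*t) * (c * (E t + φ t)) :=
        mul_le_mul_of_nonneg_left h1 hA.le
      nlinarith
  intro t ht
  have hM0 : M 0 = 0 := by
    simp only [hM, hφdef]
    simp [hE0, intervalIntegral.integral_same]
  have hle : M t ≤ 0 := by
    have := hManti (Set.left_mem_Icc.2 hT.le) ht ht.1
    simpa [hM0] using this
  have hge : 0 ≤ M t :=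
    mul_nonneg (Real.exp_pos _).le (add_nonneg (hEnn t) (hφnn t ht))
  have hMt : M t = 0 := le_antisymm hle hge
  have hS : E t + φ t = 0 := by
    have := hMt
    rw [hM] at this
    rcases mul_eq_zero.1 this with h | h
    · exact absurd h (Real.exp_ne_zero _)
    · exact h
  have := hφnn t ht
  have := hEnn t
  linarith

/-- A regular solution of the Neumann problem for the integro-differential operator
`L u = u_t − ε u_xx + a u + b ∫₀^t e^{−β(t−τ)} u(·,τ) dτ` on `Ω_T`:
continuous on `[0,L] × [0,T]`, with `u_t`, `u_x`, `u_xx` existing and continuous for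
`0 < t ≤ T`, satisfying the equation on `(0,L) × (0,T]`, the initial condition, and
the Neumann boundary conditions. -/
def IsRegularNeumannSolution (a b ε β L T : ℝ) (f : ℝ → ℝ → ℝ)
    (u₀ ψ₁ ψ₂ : ℝ → ℝ) (u : ℝ → ℝ → ℝ) : Prop :=
  ContinuousOn (fun p : ℝ × ℝ => u p.1 p.2) (Set.Icc 0 L ×ˢ Set.Icc 0 T) ∧
  (∀ x ∈ Set.Icc (0:ℝ) L, ∀ t ∈ Set.Ioc (0:ℝ) T,
    DifferentiableAt ℝ (fun τ => u x τ) t ∧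
    DifferentiableAt ℝ (fun y => u y t) x ∧
    DifferentiableAt ℝ (fun y => deriv (fun z => u z t) y) x) ∧
  ContinuousOn (fun p : ℝ × ℝ => deriv (fun τ => u p.1 τ) p.2)
    (Set.Icc 0 L ×ˢ Set.Ioc 0 T) ∧
  ContinuousOn (fun p : ℝ × ℝ => deriv (fun y => u y p.2) p.1)
    (Set.Icc 0 L ×ˢ Set.Ioc 0 T) ∧
  ContinuousOn (fun p : ℝ × ℝ => iteratedDeriv 2 (fun y => u y p.2) p.1)
    (Set.Icc 0 L ×ˢ Set.Ioc 0 T) ∧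
  (∀ x ∈ Set.Ioo (0:ℝ) L, ∀ t ∈ Set.Ioc (0:ℝ) T,
    deriv (fun τ => u x τ) t - ε * iteratedDeriv 2 (fun y => u y t) x + a * u x t
      + b * ∫ τ in (0:ℝ)..t, Real.exp (-β * (t - τ)) * u x τ = f x t) ∧
  (∀ x ∈ Set.Icc (0:ℝ) L, u x 0 = u₀ x) ∧
  (∀ t ∈ Set.Ioc (0:ℝ) T,
    deriv (fun y => u y t) 0 = ψ₁ t ∧ deriv (fun y => u y t) L = ψ₂ t)

set_option maxHeartbeats 1000000 in
/-- uniqueness of regular solutions of the Neumann problem. -/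
theorem neumann_uniqueness (a b ε β L T : ℝ) (ha : 0 < a) (hb : 0 < b) (hε : 0 < ε)
    (hβ : 0 < β) (hL : 0 < L) (hT : 0 < T)
    (f : ℝ → ℝ → ℝ)
    (hf : ContinuousOn (fun p : ℝ × ℝ => f p.1 p.2) (Set.Icc 0 L ×ˢ Set.Icc 0 T))
    (u₀ : ℝ → ℝ) (hu₀ : ContinuousOn u₀ (Set.Icc 0 L))
    (ψ₁ ψ₂ : ℝ → ℝ) (hψ₁ : ContinuousOn ψ₁ (Set.Icc 0 T))
    (hψ₂ : ContinuousOn ψ₂ (Set.Icc 0 T))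
    (u₁ u₂ : ℝ → ℝ → ℝ)
    (h₁ : IsRegularNeumannSolution a b ε β L T f u₀ ψ₁ ψ₂ u₁)
    (h₂ : IsRegularNeumannSolution a b ε β L T f u₀ ψ₁ ψ₂ u₂) :
    ∀ x ∈ Set.Icc (0:ℝ) L, ∀ t ∈ Set.Icc (0:ℝ) T, u₁ x t = u₂ x t := by
  obtain ⟨c₁, d₁, ct₁, cx₁, cxx₁, eq₁, ic₁, bc₁⟩ := h₁
  obtain ⟨c₂, d₂, ct₂, cx₂, cxx₂, eq₂, ic₂, bc₂⟩ := h₂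
  set w : ℝ → ℝ → ℝ := fun x t => u₁ x t - u₂ x t with hwdef
  set cX : ℝ → ℝ := fun x => max 0 (min x L) with hcX
  set cT : ℝ → ℝ := fun t => max 0 (min t T) with hcTdef
  have cX_mem : ∀ x, cX x ∈ Set.Icc (0:ℝ) L :=
    fun x => ⟨le_max_left _ _, max_le hL.le (min_le_right _ _)⟩
  have cT_mem : ∀ t, cT t ∈ Set.Icc (0:ℝ) T :=
    fun t => ⟨le_max_left _ _, max_le hT.le (min_le_right _ _)⟩
  have cX_eq : ∀ x ∈ Set.Icc (0:ℝ) L, cX x = x := fun x hx => by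
    simp only [hcX]; rw [min_eq_left hx.2, max_eq_right hx.1]
  have cT_eq : ∀ t ∈ Set.Icc (0:ℝ) T, cT t = t := fun t ht => by
    simp only [hcTdef]; rw [min_eq_left ht.2, max_eq_right ht.1]
  have cX_cont : Continuous cX := continuous_const.max (continuous_id.min continuous_const)
  have cT_cont : Continuous cT := continuous_const.max (continuous_id.min continuous_const)
  set W : ℝ → ℝ → ℝ := fun x t => w (cX x) (cT t) with hWdef
  have hwcont : ContinuousOn (fun p : ℝ × ℝ => w p.1 p.2) (Set.Icc 0 L ×ˢ Set.Icc 0 T) := by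
    simp only [hwdef]; exact c₁.sub c₂
  have hWc : Continuous (fun p : ℝ × ℝ => W p.1 p.2) := by
    have hclamp : Continuous (fun p : ℝ × ℝ => ((cX p.1, cT p.2) : ℝ × ℝ)) :=
      (cX_cont.comp continuous_fst).prodMk (cT_cont.comp continuous_snd)
    have h := hwcont.comp_continuous hclamp (fun p => ⟨cX_mem _, cT_mem _⟩)
    simpa only [hWdef, Function.comp_def] using h
  have hWeq : ∀ x ∈ Set.Icc (0:ℝ) L, ∀ t ∈ Set.Icc (0:ℝ) T, W x t = w x t := by
    intro x hx t ht
    simp only [hWdef]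
    rw [cX_eq x hx, cT_eq t ht]
  set vt : ℝ → ℝ → ℝ :=
    fun x t => deriv (fun τ => u₁ x τ) t - deriv (fun τ => u₂ x τ) t with hvtdef
  set vx : ℝ → ℝ → ℝ :=
    fun x t => deriv (fun y => u₁ y t) x - deriv (fun y => u₂ y t) x with hvxdef
  set vxx : ℝ → ℝ → ℝ := fun x t =>
    iteratedDeriv 2 (fun y => u₁ y t) x - iteratedDeriv 2 (fun y => u₂ y t) x with hvxxdef
  have hdt : ∀ x ∈ Set.Icc (0:ℝ) L, ∀ t ∈ Set.Ioc (0:ℝ) T,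
      HasDerivAt (fun τ => w x τ) (vt x t) t := by
    intro x hx t ht
    simp only [hwdef, hvtdef]
    exact ((d₁ x hx t ht).1.hasDerivAt.sub (d₂ x hx t ht).1.hasDerivAt)
  have hdx : ∀ x ∈ Set.Icc (0:ℝ) L, ∀ t ∈ Set.Ioc (0:ℝ) T,
      HasDerivAt (fun y => w y t) (vx x t) x := by
    intro x hx t ht
    simp only [hwdef, hvxdef]
    exact ((d₁ x hx t ht).2.1.hasDerivAt.sub (d₂ x hx t ht).2.1.hasDerivAt)
  have hitd : ∀ u : ℝ → ℝ, iteratedDeriv 2 u = deriv (deriv u) := by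
    intro u
    rw [show (2:ℕ) = 1 + 1 from rfl, iteratedDeriv_succ, iteratedDeriv_one]
  have hdxx : ∀ x ∈ Set.Icc (0:ℝ) L, ∀ t ∈ Set.Ioc (0:ℝ) T,
      HasDerivAt (fun y => vx y t) (vxx x t) x := by
    intro x hx t ht
    have h1 := (d₁ x hx t ht).2.2.hasDerivAt
    have h2 := (d₂ x hx t ht).2.2.hasDerivAt
    simp only [hvxdef, hvxxdef, hitd]
    exact h1.sub h2
  have hbc : ∀ t ∈ Set.Ioc (0:ℝ) T, vx 0 t = 0 ∧ vx L t = 0 := by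
    intro t ht
    simp only [hvxdef]
    constructor
    · rw [(bc₁ t ht).1, (bc₂ t ht).1, sub_self]
    · rw [(bc₁ t ht).2, (bc₂ t ht).2, sub_self]
  have hic : ∀ x : ℝ, W x 0 = 0 := by
    intro x
    have h0 : cT 0 = 0 := cT_eq 0 ⟨le_rfl, hT.le⟩
    simp only [hWdef, hwdef, h0]
    rw [ic₁ _ (cX_mem x), ic₂ _ (cX_mem x), sub_self]
  have heqn : ∀ x ∈ Set.Ioo (0:ℝ) L, ∀ t ∈ Set.Ioc (0:ℝ) T,
      vt x t = ε * vxx x t - a * w x t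
        - b * ∫ τ in (0:ℝ)..t, Real.exp (-β * (t - τ)) * w x τ := by
    intro x hx t ht
    have hx' : x ∈ Set.Icc (0:ℝ) L := ⟨hx.1.le, hx.2.le⟩
    have hsub : Set.uIcc (0:ℝ) t ⊆ Set.Icc (0:ℝ) T := by
      rw [Set.uIcc_of_le ht.1.le]; exact Set.Icc_subset_Icc le_rfl ht.2
    have hc₁x : ContinuousOn (fun τ => u₁ x τ) (Set.Icc (0:ℝ) T) := by
      have h := c₁.comp (f := fun τ : ℝ => ((x, τ) : ℝ × ℝ))
        (Continuous.continuousOn (continuous_const.prodMk continuous_id))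
        (fun τ hτ => Set.mk_mem_prod hx' hτ)
      simpa only [Function.comp_def] using h
    have hc₂x : ContinuousOn (fun τ => u₂ x τ) (Set.Icc (0:ℝ) T) := by
      have h := c₂.comp (f := fun τ : ℝ => ((x, τ) : ℝ × ℝ))
        (Continuous.continuousOn (continuous_const.prodMk continuous_id))
        (fun τ hτ => Set.mk_mem_prod hx' hτ)
      simpa only [Function.comp_def] using h
    have hexpc : Continuous (fun τ : ℝ => Real.exp (-β * (t - τ))) :=
      Real.continuous_exp.comp (continuous_const.mul (continuous_const.sub continuous_id))
    have hint₁ : IntervalIntegrable (fun τ => Real.exp (-β * (t - τ)) * u₁ x τ) volume 0 t :=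
      ((hexpc.continuousOn.mul (hc₁x.mono hsub)).intervalIntegrable)
    have hint₂ : IntervalIntegrable (fun τ => Real.exp (-β * (t - τ)) * u₂ x τ) volume 0 t :=
      ((hexpc.continuousOn.mul (hc₂x.mono hsub)).intervalIntegrable)
    have hsplit : (∫ τ in (0:ℝ)..t, Real.exp (-β * (t - τ)) * w x τ)
        = (∫ τ in (0:ℝ)..t, Real.exp (-β * (t - τ)) * u₁ x τ)
          - ∫ τ in (0:ℝ)..t, Real.exp (-β * (t - τ)) * u₂ x τ := by
      rw [← intervalIntegral.integral_sub hint₁ hint₂]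
      apply intervalIntegral.integral_congr
      intro τ _
      simp only [hwdef]
      ring
    have he₁ := eq₁ x hx t ht
    have he₂ := eq₂ x hx t ht
    rw [hsplit]
    simp only [hvtdef, hvxxdef, hwdef]
    linear_combination he₁ - he₂
  set E : ℝ → ℝ := fun t => ∫ x in (0:ℝ)..L, (W x t)^2 with hEdef
  have hWc2 : Continuous (fun p : ℝ × ℝ => (W p.1 p.2)^2) := hWc.pow 2
  have hEc : Continuous E := by
    rw [hEdef]
    exact intervalIntegral.continuous_parametric_intervalIntegral_of_continuous'
      (f := fun t x => (W x t)^2) (μ := volume)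
      (hWc2.comp (continuous_snd.prodMk continuous_fst)) 0 L
  have hEnn : ∀ t, 0 ≤ E t :=
    fun t => intervalIntegral.integral_nonneg hL.le (fun y _ => sq_nonneg _)
  have hE0 : E 0 = 0 := by
    have hzero : (fun x => (W x 0)^2) = fun _ => (0:ℝ) := funext fun x => by rw [hic x]; ring
    simp only [hEdef, hzero]
    simp
  have hWslice : ∀ s : ℝ, Continuous (fun x => W x s) :=
    fun s => hWc.comp (continuous_id.prodMk continuous_const)
  have hWtslice : ∀ x : ℝ, Continuous (fun s => W x s) :=
    fun x => hWc.comp (continuous_const.prodMk continuous_id)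
  have hvxcont : ∀ t ∈ Set.Ioc (0:ℝ) T, ContinuousOn (fun x => vx x t) (Set.Icc (0:ℝ) L) := by
    intro t ht
    have h := (cx₁.sub cx₂).comp (f := fun x : ℝ => ((x, t) : ℝ × ℝ))
      (Continuous.continuousOn (continuous_id.prodMk continuous_const))
      (fun x hx => Set.mk_mem_prod hx ht)
    simpa only [hvxdef, Function.comp_def, Pi.sub_apply] using h
  have hvxxcont : ∀ t ∈ Set.Ioc (0:ℝ) T, ContinuousOn (fun x => vxx x t) (Set.Icc (0:ℝ) L) := by
    intro t ht
    have h := (cxx₁.sub cxx₂).comp (f := fun x : ℝ => ((x, t) : ℝ × ℝ))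
      (Continuous.continuousOn (continuous_id.prodMk continuous_const))
      (fun x hx => Set.mk_mem_prod hx ht)
    simpa only [hvxxdef, Function.comp_def, Pi.sub_apply] using h
  have hvtcont : ContinuousOn (fun p : ℝ×ℝ => vt p.1 p.2) (Set.Icc 0 L ×ˢ Set.Ioc 0 T) := by
    simp only [hvtdef]; exact ct₁.sub ct₂
  have hibp : ∀ t ∈ Set.Ioc (0:ℝ) T,
      (∫ x in (0:ℝ)..L, ((vx x t)^2 + W x t * vxx x t)) = 0 := by
    intro t ht
    have htc : t ∈ Set.Icc (0:ℝ) T := ⟨ht.1.le, ht.2⟩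
    have hvxc := hvxcont t ht
    have hvxxc := hvxxcont t ht
    have hWct := hWslice t
    have hf'int : IntervalIntegrable (fun x => (vx x t)^2 + W x t * vxx x t) volume 0 L := by
      apply ContinuousOn.intervalIntegrable
      rw [Set.uIcc_of_le hL.le]
      exact (hvxc.pow 2).add (hWct.continuousOn.mul hvxxc)
    have key := intervalIntegral.integral_eq_sub_of_hasDeriv_right_of_le hL.le
      (f := fun x => W x t * vx x t) (f' := fun x => (vx x t)^2 + W x t * vxx x t)
      (hWct.continuousOn.mul hvxc) ?_ hf'int
    · rw [key]
      try simp only []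
      rw [(hbc t ht).1, (hbc t ht).2]
      ring
    · intro x hx
      have hx' : x ∈ Set.Icc (0:ℝ) L := ⟨hx.1.le, hx.2.le⟩
      have hev : (fun y => W y t) =ᶠ[nhds x] (fun y => w y t) := by
        filter_upwards [Ioo_mem_nhds hx.1 hx.2] with y hy
        exact hWeq y ⟨hy.1.le, hy.2.le⟩ t htc
      have hprod : HasDerivAt (fun y => w y t * vx y t)
          (vx x t * vx x t + w x t * vxx x t) x := (hdx x hx' t ht).mul (hdxx x hx' t ht)
      have hcongr : HasDerivAt (fun y => W y t * vx y t)
          (vx x t * vx x t + w x t * vxx x t) x :=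
        hprod.congr_of_eventuallyEq (hev.mul (Filter.EventuallyEq.refl _ _))
      have hval : (vx x t)^2 + W x t * vxx x t = vx x t * vx x t + w x t * vxx x t := by
        rw [hWeq x hx' t htc]; ring
      try simp only []
      rw [hval]
      exact hcongr.hasDerivWithinAt
  have hED : ∀ t₀ ∈ Set.Ioo (0:ℝ) T, ∃ D, HasDerivAt E D t₀ ∧
      D ≤ (b*T + b) * E t₀ + (b*T + b) * ∫ s in (0:ℝ)..t₀, E s := by
    intro t₀ ht₀
    have ht₀Ioc : t₀ ∈ Set.Ioc (0:ℝ) T := ⟨ht₀.1, ht₀.2.le⟩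
    have ht₀Icc : t₀ ∈ Set.Icc (0:ℝ) T := ⟨ht₀.1.le, ht₀.2.le⟩
    set ε' : ℝ := min t₀ (T - t₀) / 2 with hε'def
    have hminpos : 0 < min t₀ (T - t₀) := lt_min ht₀.1 (sub_pos.2 ht₀.2)
    have hε'pos : 0 < ε' := by positivity
    have hmin1 : min t₀ (T - t₀) ≤ t₀ := min_le_left _ _
    have hmin2 : min t₀ (T - t₀) ≤ T - t₀ := min_le_right _ _
    have hball : ∀ s ∈ Metric.ball t₀ ε', s ∈ Set.Ioo (0:ℝ) T ∧
        s ∈ Set.Icc (t₀ - ε') (t₀ + ε') := by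
      intro s hs
      rw [Metric.mem_ball, Real.dist_eq, abs_lt] at hs
      refine ⟨⟨by linarith, by linarith⟩, ⟨by linarith, by linarith⟩⟩
    have hKsub : (Set.Icc (0:ℝ) L ×ˢ Set.Icc (t₀ - ε') (t₀ + ε'))
        ⊆ Set.Icc (0:ℝ) L ×ˢ Set.Ioc (0:ℝ) T := by
      rintro ⟨x, s⟩ ⟨hx, hs⟩
      simp only [Set.mem_Icc] at hs
      exact ⟨hx, ⟨by linarith [hs.1], by linarith [hs.2]⟩⟩
    have hFc : ContinuousOn (fun p : ℝ×ℝ => 2 * W p.1 p.2 * vt p.1 p.2)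
        (Set.Icc (0:ℝ) L ×ˢ Set.Icc (t₀ - ε') (t₀ + ε')) :=
      ((continuous_const.mul hWc).continuousOn.mul (hvtcont.mono hKsub))
    obtain ⟨C, hC⟩ := (isCompact_Icc.prod isCompact_Icc).exists_bound_of_continuousOn hFc
    have hvtt₀c : ContinuousOn (fun x => vt x t₀) (Set.Icc (0:ℝ) L) := by
      have h := hvtcont.comp (f := fun x : ℝ => ((x, t₀) : ℝ × ℝ))
        (Continuous.continuousOn (continuous_id.prodMk continuous_const))
        (fun x hx => Set.mk_mem_prod hx ht₀Ioc)
      simpa only [Function.comp_def] using h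
    have main := intervalIntegral.hasDerivAt_integral_of_dominated_loc_of_deriv_le
      (F := fun s x => (W x s)^2) (F' := fun s x => 2 * W x s * vt x s)
      (a := 0) (b := L) (μ := volume) (x₀ := t₀) (bound := fun _ => C) (Metric.ball_mem_nhds t₀ hε'pos)
      (Filter.Eventually.of_forall fun s => ((hWslice s).pow 2).aestronglyMeasurable)
      (((hWslice t₀).pow 2).intervalIntegrable _ _)
      ?_ ?_ intervalIntegrable_const ?_
    rotate_left
    · have hcont : ContinuousOn (fun x => 2 * W x t₀ * vt x t₀) (Set.Icc (0:ℝ) L) :=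
        (continuous_const.mul (hWslice t₀)).continuousOn.mul hvtt₀c
      rw [Set.uIoc_of_le hL.le]
      exact (hcont.mono Set.Ioc_subset_Icc_self).aestronglyMeasurable measurableSet_Ioc
    · refine Filter.Eventually.of_forall (fun x hx s hs => ?_)
      rw [Set.uIoc_of_le hL.le] at hx
      exact hC (x, s) ⟨Set.Ioc_subset_Icc_self hx, (hball s hs).2⟩
    · refine Filter.Eventually.of_forall (fun x hx s hs => ?_)
      rw [Set.uIoc_of_le hL.le] at hx
      have hx' : x ∈ Set.Icc (0:ℝ) L := Set.Ioc_subset_Icc_self hx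
      obtain ⟨hsIoo, -⟩ := hball s hs
      have hsIoc : s ∈ Set.Ioc (0:ℝ) T := ⟨hsIoo.1, hsIoo.2.le⟩
      have hev : (fun τ => W x τ) =ᶠ[nhds s] (fun τ => w x τ) := by
        filter_upwards [Ioo_mem_nhds hsIoo.1 hsIoo.2] with τ hτ
        exact hWeq x hx' τ ⟨hτ.1.le, hτ.2.le⟩
      have hder : HasDerivAt (fun τ => (w x τ)^2) (2 * w x s * vt x s) s := by
        have h := (hdt x hx' s hsIoc).fun_pow 2
        convert h using 1
        all_goals first | rfl | norm_num
      have hev2 : (fun τ => (W x τ)^2) =ᶠ[nhds s] (fun τ => (w x τ)^2) :=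
        hev.mono fun τ hτ => by simp only [hτ]
      have hfinal : HasDerivAt (fun τ => (W x τ)^2) (2 * w x s * vt x s) s :=
        hder.congr_of_eventuallyEq hev2
      try simp only []
      rw [hWeq x hx' s ⟨hsIoo.1.le, hsIoo.2.le⟩]
      exact hfinal
    obtain ⟨-, hder⟩ := main
    refine ⟨_, hder, ?_⟩
    set IwW : ℝ → ℝ := fun x => ∫ τ in (0:ℝ)..t₀, Real.exp (-β * (t₀ - τ)) * W x τ with hIwdef
    set Jf : ℝ → ℝ := fun x => ∫ τ in (0:ℝ)..t₀, (W x τ)^2 with hJfdef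
    have hIwc : Continuous IwW := by
      rw [hIwdef]
      exact intervalIntegral.continuous_parametric_intervalIntegral_of_continuous'
        (f := fun x τ => Real.exp (-β * (t₀ - τ)) * W x τ) (μ := volume)
        ((Real.continuous_exp.comp
          (continuous_const.mul (continuous_const.sub continuous_snd))).mul hWc) 0 t₀
    have hJfc : Continuous Jf := by
      rw [hJfdef]
      exact intervalIntegral.continuous_parametric_intervalIntegral_of_continuous'
        (f := fun x τ => (W x τ)^2) (μ := volume) hWc2 0 t₀
    have haeL : ∀ᵐ x : ℝ ∂volume, x ≠ L := by
      simpa [ae_iff] using measure_singleton (L : ℝ)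
    have hvxxc := hvxxcont t₀ ht₀Ioc
    have hD1 : (∫ x in (0:ℝ)..L, 2 * W x t₀ * vt x t₀)
        = ∫ x in (0:ℝ)..L, 2 * W x t₀ * (ε * vxx x t₀ - a * W x t₀ - b * IwW x) := by
      apply intervalIntegral.integral_congr_ae
      filter_upwards [haeL] with x hxne hx
      rw [Set.uIoc_of_le hL.le] at hx
      have hxIoo : x ∈ Set.Ioo (0:ℝ) L := ⟨hx.1, lt_of_le_of_ne hx.2 hxne⟩
      have hxIcc : x ∈ Set.Icc (0:ℝ) L := ⟨hx.1.le, hx.2⟩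
      have hIeq : IwW x = ∫ τ in (0:ℝ)..t₀, Real.exp (-β * (t₀ - τ)) * w x τ := by
        rw [hIwdef]
        apply intervalIntegral.integral_congr
        intro τ hτ
        rw [Set.uIcc_of_le ht₀.1.le] at hτ
        show Real.exp (-β * (t₀ - τ)) * W x τ = Real.exp (-β * (t₀ - τ)) * w x τ
        rw [hWeq x hxIcc τ ⟨hτ.1, hτ.2.trans ht₀.2.le⟩]
      rw [hWeq x hxIcc t₀ ht₀Icc, hIeq, heqn x hxIoo t₀ ht₀Ioc]
    have hpt : ∀ x ∈ Set.Icc (0:ℝ) L,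
        2 * W x t₀ * (ε * vxx x t₀ - a * W x t₀ - b * IwW x)
          ≤ 2 * ε * (W x t₀ * vxx x t₀) + b * t₀ * (W x t₀)^2 + b * Jf x := by
      intro x hx
      have habsc : Continuous (fun τ => |W x τ|) := (hWtslice x).abs
      have habs : |IwW x| ≤ ∫ τ in (0:ℝ)..t₀, |W x τ| := by
        rw [hIwdef]
        refine (intervalIntegral.abs_integral_le_integral_abs ht₀.1.le).trans ?_
        apply intervalIntegral.integral_mono_on ht₀.1.le
          (((Real.continuous_exp.comp (continuous_const.mul
            (continuous_const.sub continuous_id))).mul (hWtslice x)).abs.intervalIntegrable _ _)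
          (habsc.intervalIntegrable _ _)
        intro τ hτ
        simp only [Function.comp_apply, Pi.mul_apply, Pi.sub_apply, id]
        rw [abs_mul, Real.abs_exp]
        have h1 : -β * (t₀ - τ) ≤ 0 := by nlinarith [hτ.2]
        have h2 : Real.exp (-β * (t₀ - τ)) ≤ 1 := Real.exp_le_one_iff.2 h1
        exact mul_le_of_le_one_left (abs_nonneg _) h2
      have hsq : 2 * |W x t₀| * ∫ τ in (0:ℝ)..t₀, |W x τ|
          ≤ t₀ * (W x t₀)^2 + Jf x := by
        have hi1 : IntervalIntegrable (fun τ => 2 * |W x t₀| * |W x τ|) volume 0 t₀ :=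
          (continuous_const.mul habsc).intervalIntegrable _ _
        have hi2 : IntervalIntegrable (fun τ => (W x t₀)^2 + (W x τ)^2) volume 0 t₀ :=
          (continuous_const.add ((hWtslice x).pow 2)).intervalIntegrable _ _
        have h1 : (∫ τ in (0:ℝ)..t₀, 2 * |W x t₀| * |W x τ|)
            ≤ ∫ τ in (0:ℝ)..t₀, ((W x t₀)^2 + (W x τ)^2) := by
          apply intervalIntegral.integral_mono_on ht₀.1.le hi1 hi2
          intro τ _
          nlinarith [sq_abs (W x t₀), sq_abs (W x τ), sq_nonneg (|W x t₀| - |W x τ|)]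
        rw [intervalIntegral.integral_const_mul] at h1
        rw [intervalIntegral.integral_add (intervalIntegrable_const)
          (((hWtslice x).fun_pow 2).intervalIntegrable _ _),
          intervalIntegral.integral_const] at h1
        rw [hJfdef]
        simpa [smul_eq_mul, sub_zero] using h1
      have h2 : -(2 * (W x t₀ * IwW x)) ≤ 2 * |W x t₀| * |IwW x| := by
        calc -(2 * (W x t₀ * IwW x)) ≤ |2 * (W x t₀ * IwW x)| := neg_le_abs _
          _ = 2 * |W x t₀| * |IwW x| := by rw [abs_mul, abs_mul, abs_two]; ring
      have h3 : 2 * |W x t₀| * |IwW x| ≤ 2 * |W x t₀| * ∫ τ in (0:ℝ)..t₀, |W x τ| :=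
        mul_le_mul_of_nonneg_left habs (by positivity)
      have h4 : -(2 * (W x t₀ * IwW x)) ≤ t₀ * (W x t₀)^2 + Jf x := by linarith
      have h5 : b * (-(2 * (W x t₀ * IwW x))) ≤ b * (t₀ * (W x t₀)^2 + Jf x) :=
        mul_le_mul_of_nonneg_left h4 hb.le
      nlinarith [h5, mul_nonneg ha.le (sq_nonneg (W x t₀))]
    have hi1 : IntervalIntegrable (fun x => 2 * ε * (W x t₀ * vxx x t₀)) volume 0 L := by
      apply ContinuousOn.intervalIntegrable
      rw [Set.uIcc_of_le hL.le]
      exact (continuous_const.continuousOn.mul ((hWslice t₀).continuousOn.mul hvxxc))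
    have hi2 : IntervalIntegrable (fun x => b * t₀ * (W x t₀)^2) volume 0 L :=
      (continuous_const.mul ((hWslice t₀).pow 2)).intervalIntegrable _ _
    have hi3 : IntervalIntegrable (fun x => b * Jf x) volume 0 L :=
      (continuous_const.mul hJfc).intervalIntegrable _ _
    have hig1 : IntervalIntegrable
        (fun x => 2 * W x t₀ * (ε * vxx x t₀ - a * W x t₀ - b * IwW x)) volume 0 L := by
      apply ContinuousOn.intervalIntegrable
      rw [Set.uIcc_of_le hL.le]
      exact ((continuous_const.mul (hWslice t₀)).continuousOn.mul
        (((continuous_const.continuousOn.mul hvxxc).sub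
          (continuous_const.mul (hWslice t₀)).continuousOn).sub
          (continuous_const.mul hIwc).continuousOn))
    have hmono : (∫ x in (0:ℝ)..L, 2 * W x t₀ * (ε * vxx x t₀ - a * W x t₀ - b * IwW x))
        ≤ ∫ x in (0:ℝ)..L, (2 * ε * (W x t₀ * vxx x t₀) + b * t₀ * (W x t₀)^2 + b * Jf x) :=
      intervalIntegral.integral_mono_on hL.le hig1 ((hi1.add hi2).add hi3) hpt
    have hsplit2 : (∫ x in (0:ℝ)..L,
          (2 * ε * (W x t₀ * vxx x t₀) + b * t₀ * (W x t₀)^2 + b * Jf x))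
        = 2 * ε * (∫ x in (0:ℝ)..L, W x t₀ * vxx x t₀) + b * t₀ * E t₀
          + b * ∫ x in (0:ℝ)..L, Jf x := by
      rw [intervalIntegral.integral_add (hi1.add hi2) hi3,
        intervalIntegral.integral_add hi1 hi2,
        intervalIntegral.integral_const_mul, intervalIntegral.integral_const_mul,
        intervalIntegral.integral_const_mul]
    have hWvxxint : IntervalIntegrable (fun x => W x t₀ * vxx x t₀) volume 0 L := by
      apply ContinuousOn.intervalIntegrable
      rw [Set.uIcc_of_le hL.le]
      exact (hWslice t₀).continuousOn.mul hvxxc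
    have hvx2int : IntervalIntegrable (fun x => (vx x t₀)^2) volume 0 L := by
      apply ContinuousOn.intervalIntegrable
      rw [Set.uIcc_of_le hL.le]
      exact (hvxcont t₀ ht₀Ioc).pow 2
    have hib := hibp t₀ ht₀Ioc
    rw [intervalIntegral.integral_add hvx2int hWvxxint] at hib
    have hvx2nn : 0 ≤ ∫ x in (0:ℝ)..L, (vx x t₀)^2 :=
      intervalIntegral.integral_nonneg hL.le (fun y _ => sq_nonneg _)
    have hfub : (∫ x in (0:ℝ)..L, Jf x) = ∫ s in (0:ℝ)..t₀, E s := by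
      rw [hJfdef, hEdef]
      exact aux_fubini hL.le ht₀.1.le (g := fun x τ => (W x τ)^2) hWc2
    have hφnn : 0 ≤ ∫ s in (0:ℝ)..t₀, E s :=
      intervalIntegral.integral_nonneg ht₀.1.le (fun s _ => hEnn s)
    have hEt₀nn := hEnn t₀
    rw [hD1]
    calc (∫ x in (0:ℝ)..L, 2 * W x t₀ * (ε * vxx x t₀ - a * W x t₀ - b * IwW x))
        ≤ 2 * ε * (∫ x in (0:ℝ)..L, W x t₀ * vxx x t₀) + b * t₀ * E t₀
          + b * ∫ x in (0:ℝ)..L, Jf x := by rw [← hsplit2]; exact hmono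
      _ = -(2 * ε * ∫ x in (0:ℝ)..L, (vx x t₀)^2) + b * t₀ * E t₀
          + b * ∫ s in (0:ℝ)..t₀, E s := by
          rw [hfub]
          have hWv : (∫ x in (0:ℝ)..L, W x t₀ * vxx x t₀)
              = -∫ x in (0:ℝ)..L, (vx x t₀)^2 := by linarith
          rw [hWv]; ring
      _ ≤ (b*T + b) * E t₀ + (b*T + b) * ∫ s in (0:ℝ)..t₀, E s := by
          nlinarith [mul_nonneg hb.le hEt₀nn, mul_nonneg (mul_nonneg hb.le hT.le) hφnn,
            mul_nonneg hb.le hφnn, mul_nonneg hε.le hvx2nn, ht₀.2.le,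
            mul_le_mul_of_nonneg_left (mul_le_mul_of_nonneg_right ht₀.2.le hEt₀nn) hb.le]
  have hKnn : (0:ℝ) ≤ b*T + b := by positivity
  have hEzero := aux_gronwall hT hKnn hEc hE0 hEnn hED
  intro x hx t ht
  have hEt : (∫ y in (0:ℝ)..L, (W y t)^2) = 0 := hEzero t ht
  have hsq := aux_integral_zero hL ((hWslice t).fun_pow 2) (fun y => sq_nonneg _) hEt x hx
  have hW0 : W x t = 0 := by
    nlinarith [sq_nonneg (W x t), hsq]
  have hw0 : w x t = 0 := by rw [← hWeq x hx t ht]; exact hW0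
  have hfin : u₁ x t - u₂ x t = 0 := by rw [hwdef] at hw0; exact hw0
  linarith
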